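/- For every Dirichlet character χ modulo N and every complex s with Re(s) ≥ 1, if χ is nontrivial or s ≠ 1, then L(χ, s) ≠ 0. -/
import Mathlib

theorem dirichlet_LFunction_ne_zero_of_one_le_re {N : ℕ} [NeZero N]
    (χ : DirichletCharacter ℂ N) {s : ℂ} (hχs : χ ≠ 1 ∨ s ≠ 1) (hs : 1 ≤ s.re) :
    χ.LFunction s ≠ 0 := by
  exact DirichletCharacter.LFunction_ne_zero_of_one_le_re χ hχs hs
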